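/- Let u : B̄ → R with B ⊂ Z^d finite, and let ŭ : R^d → R be the convex envelope ŭ(x) = sup{ℓ(x) : ℓ affine, ℓ ≤ u on B̄}. Then for every x ∈ B: if u(x) = ŭ(x) then ∂ŭ(x;B) = ∂u(x;B), and if u(x) ≠ ŭ(x) then ∂ŭ(x;B) has Lebesgue measure zero. In particular |∂u(A;B)| = |∂ŭ(A;B)| for all A ⊂ B. -/

import Mathlib

open MeasureTheory Finset
open scoped Classical

/-- Two lattice points are nearest neighbors. -/
def latAdj {d : ℕ} (x y : Fin d → ℤ) : Prop := (∑ i, |x i - y i|) = 1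

/-- The set of the `2d` nearest neighbors of a lattice point. -/
def latNbrs {d : ℕ} (x : Fin d → ℤ) : Finset (Fin d → ℤ) :=
  Finset.image
    (fun js : Fin d × Bool => fun i => x i + (if i = js.1 then (if js.2 then 1 else -1) else 0))
    Finset.univ

/-- The discrete boundary of a finite set `E ⊂ ℤ^d`. -/
def latBd {d : ℕ} (E : Finset (Fin d → ℤ)) : Finset (Fin d → ℤ) := (E.biUnion latNbrs) \ E

/-- The discrete closure `Ē = E ∪ ∂E`. -/
def latCl {d : ℕ} (E : Finset (Fin d → ℤ)) : Finset (Fin d → ℤ) := E ∪ latBd E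

/-- Dot product of `p ∈ ℝ^d` with a lattice point. -/
def dotZ {d : ℕ} (p : Fin d → ℝ) (x : Fin d → ℤ) : ℝ := ∑ i, p i * (x i : ℝ)

/-- The subdifferential `∂u(x;E)`. -/
def subdiff {d : ℕ} (u : (Fin d → ℤ) → ℝ) (E : Finset (Fin d → ℤ)) (x : Fin d → ℤ) :
    Set (Fin d → ℝ) :=
  {p | ∀ y ∈ latCl E, u x - dotZ p x ≤ u y - dotZ p y}

/-- The subdifferential `∂u(A;E) = ⋃_{x ∈ A} ∂u(x;E)`. -/
def subdiffU {d : ℕ} (u : (Fin d → ℤ) → ℝ) (A E : Finset (Fin d → ℤ)) : Set (Fin d → ℝ) :=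
  ⋃ x ∈ A, subdiff u E x

/-- Euclidean distance between lattice points. -/
noncomputable def distZ {d : ℕ} (x y : Fin d → ℤ) : ℝ :=
  Real.sqrt (∑ i, ((x i - y i : ℤ) : ℝ) ^ 2)

/-- The convex envelope `ŭ(x) = sup{ℓ(x) : ℓ affine, ℓ ≤ u on B̄}`, defined on all of `ℝ^d`. -/
noncomputable def convEnv {d : ℕ} (u : (Fin d → ℤ) → ℝ) (B : Finset (Fin d → ℤ))
    (x : Fin d → ℝ) : ℝ :=
  sSup {t | ∃ a : Fin d → ℝ, ∃ b : ℝ,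
    (∀ y ∈ latCl B, (∑ i, a i * (y i : ℝ)) + b ≤ u y) ∧ t = (∑ i, a i * x i) + b}

/-- Restriction of the convex envelope to lattice points. -/
noncomputable def convEnvZ {d : ℕ} (u : (Fin d → ℤ) → ℝ) (B : Finset (Fin d → ℤ)) :
    (Fin d → ℤ) → ℝ :=
  fun y => convEnv u B (fun i => (y i : ℝ))

lemma hyperplane_null {d : ℕ} (c : Fin d → ℝ) (hc : c ≠ 0) (t : ℝ) :
    volume {p : Fin d → ℝ | (∑ i, p i * c i) = t} = 0 := by
  obtain ⟨j, hj⟩ : ∃ j, c j ≠ 0 := by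
    by_contra h; push_neg at h; exact hc (funext h)
  set L : (Fin d → ℝ) →ₗ[ℝ] ℝ :=
    { toFun := fun p => ∑ i, p i * c i
      map_add' := fun p q => by simp [add_mul, Finset.sum_add_distrib]
      map_smul' := fun r p => by simp [Finset.mul_sum, mul_assoc] } with hL
  have hker : LinearMap.ker L ≠ ⊤ := by
    intro h
    have h1 : Pi.single j (1:ℝ) ∈ LinearMap.ker L := h ▸ Submodule.mem_top
    have h2 : L (Pi.single j (1:ℝ)) = c j := by
      simp [hL, Pi.single_apply, Finset.sum_ite_eq']
    rw [LinearMap.mem_ker, h2] at h1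
    exact hj h1
  set p₀ : Fin d → ℝ := Pi.single j (t / c j) with hp₀
  have hLp₀ : L p₀ = t := by
    simp [hL, hp₀, Pi.single_apply, Finset.sum_ite_eq', div_mul_cancel₀ _ hj]
  have hset : {p : Fin d → ℝ | (∑ i, p i * c i) = t}
      = (fun p => p + (-p₀)) ⁻¹' (LinearMap.ker L : Set (Fin d → ℝ)) := by
    ext p
    simp only [Set.mem_setOf_eq, Set.mem_preimage, SetLike.mem_coe, LinearMap.mem_ker,
      map_add, map_neg, hLp₀]
    constructor
    · intro h; have : L p = t := h; rw [this]; ring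
    · intro h; have : L p = t := by linarith
      exact this
  rw [hset, measure_preimage_add_right]
  exact Measure.addHaar_submodule volume _ hker

/-- bound and membership facts for the envelope -/
lemma env_le_u {d : ℕ} (u : (Fin d → ℤ) → ℝ) (B : Finset (Fin d → ℤ))
    {y : Fin d → ℤ} (hy : y ∈ latCl B) : convEnvZ u B y ≤ u y := by
  apply csSup_le
  · refine ⟨((latCl B).image u).min' ⟨u y, Finset.mem_image_of_mem u hy⟩, fun _ => 0,
      ((latCl B).image u).min' ⟨u y, Finset.mem_image_of_mem u hy⟩, ?_, by simp⟩
    intro z hz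
    simpa using Finset.min'_le _ _ (Finset.mem_image_of_mem u hz)
  · rintro t ⟨a, b, hab, rfl⟩
    exact hab y hy

lemma le_env {d : ℕ} (u : (Fin d → ℤ) → ℝ) (B : Finset (Fin d → ℤ))
    {y : Fin d → ℤ} (hy : y ∈ latCl B) (a : Fin d → ℝ) (b : ℝ)
    (hab : ∀ z ∈ latCl B, (∑ i, a i * (z i : ℝ)) + b ≤ u z) :
    (∑ i, a i * (y i : ℝ)) + b ≤ convEnvZ u B y := by
  apply le_csSup
  · exact ⟨u y, by rintro t ⟨a', b', hab', rfl⟩; exact hab' y hy⟩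
  · exact ⟨a, b, hab, rfl⟩

/-- At contact points `u(x) = ŭ(x)` the subdifferentials of `u` and `ŭ` agree; at non-contact
points the subdifferential of `ŭ` is Lebesgue-null. In particular
`|∂u(A;B)| = |∂ŭ(A;B)|` for all `A ⊆ B`. -/
theorem convex_envelope_subdiff (d : ℕ) (hd : 0 < d)
    (B : Finset (Fin d → ℤ)) (u : (Fin d → ℤ) → ℝ) :
    (∀ x ∈ B,
      (u x = convEnvZ u B x → subdiff (convEnvZ u B) B x = subdiff u B x) ∧
      (u x ≠ convEnvZ u B x → volume (subdiff (convEnvZ u B) B x) = 0)) ∧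
    ∀ A : Finset (Fin d → ℤ), A ⊆ B →
      volume (subdiffU u A B) = volume (subdiffU (convEnvZ u B) A B) := by
  set v := convEnvZ u B with hv
  -- Part 1 : at contact points the subdifferentials agree
  have part1 : ∀ x ∈ B, u x = v x → subdiff v B x = subdiff u B x := by
    intro x hx hc
    have hxCl : x ∈ latCl B := Finset.mem_union_left _ hx
    ext p
    simp only [subdiff, Set.mem_setOf_eq]
    constructor
    · intro hp y hy
      have h1 := hp y hy
      have h2 := env_le_u u B hy
      rw [hc]
      linarith
    · intro hp y hy
      have hcon : ∀ z ∈ latCl B, (∑ i, p i * (z i : ℝ)) + (u x - dotZ p x) ≤ u z := by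
        intro z hz
        have := hp z hz
        simp only [dotZ] at this ⊢
        linarith
      have h1 := le_env u B hy p (u x - dotZ p x) hcon
      have h2 : dotZ p y + (u x - dotZ p x) ≤ v y := by
        simpa [dotZ] using h1
      rw [← hc]
      linarith
  -- Part 2 : at non-contact points the subdifferential of the envelope is null
  have part2 : ∀ x ∈ B, u x ≠ v x → volume (subdiff v B x) = 0 := by
    intro x hx hne
    have hxCl : x ∈ latCl B := Finset.mem_union_left _ hx
    have key : subdiff v B x ⊆
        ⋃ y ∈ ((latCl B).erase x : Finset (Fin d → ℤ)),
          {p : Fin d → ℝ | (∑ i, p i * ((x i : ℝ) - (y i : ℝ))) = v x - v y} := by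
      intro p hp
      -- there is a contact point y of the affine minorant ℓ(z) = p·z + (v x - p·x)
      have hle : ∀ y ∈ latCl B, dotZ p y + (v x - dotZ p x) ≤ v y := by
        intro y hy
        have := hp y hy
        simp only [subdiff, Set.mem_setOf_eq] at hp
        have := hp y hy
        linarith
      obtain ⟨y, hy, hcontact⟩ : ∃ y ∈ latCl B, u y = dotZ p y + (v x - dotZ p x) := by
        by_contra h
        push_neg at h
        have hlt : ∀ y ∈ latCl B, dotZ p y + (v x - dotZ p x) < u y := by
          intro y hy
          exact lt_of_le_of_ne (le_trans (hle y hy) (env_le_u u B hy)) (Ne.symm (h y hy))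
        set f : (Fin d → ℤ) → ℝ := fun y => u y - (dotZ p y + (v x - dotZ p x)) with hf
        have hBne : ((latCl B).image f).Nonempty := ⟨f x, Finset.mem_image_of_mem f hxCl⟩
        set ε := ((latCl B).image f).min' hBne with hε
        have hεpos : 0 < ε := by
          have := Finset.min'_mem ((latCl B).image f) hBne
          rw [Finset.mem_image] at this
          obtain ⟨z, hz, hfz⟩ := this
          rw [hε, ← hfz]
          have := hlt z hz
          simp only [hf]
          linarith
        have hcon : ∀ z ∈ latCl B, (∑ i, p i * (z i : ℝ)) + (v x - dotZ p x + ε) ≤ u z := by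
          intro z hz
          have h1 : ε ≤ f z := Finset.min'_le _ _ (Finset.mem_image_of_mem f hz)
          simp only [hf] at h1
          simp only [dotZ] at h1 ⊢
          linarith
        have h2 := le_env u B hxCl p (v x - dotZ p x + ε) hcon
        rw [← hv] at h2
        simp only [dotZ] at h2
        linarith
      have hyx : y ≠ x := by
        intro h
        subst h
        apply hne
        have h1 := env_le_u u B hy
        have := hle y hy
        linarith
      refine Set.mem_biUnion (Finset.mem_erase.mpr ⟨hyx, hy⟩) ?_
      have h1 := hle y hy
      have h2 : v y ≤ u y := env_le_u u B hy
      have heq : v x - dotZ p x = v y - dotZ p y := by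
        simp only [subdiff, Set.mem_setOf_eq] at hp
        have := hp y hy
        linarith [hcontact ▸ h2]
      show (∑ i, p i * ((x i : ℝ) - (y i : ℝ))) = v x - v y
      simp only [mul_sub]
      rw [Finset.sum_sub_distrib]
      have : dotZ p x - dotZ p y = v x - v y := by linarith
      simpa [dotZ] using this
    refine measure_mono_null key ?_
    refine le_antisymm ?_ zero_le
    calc volume (⋃ y ∈ ((latCl B).erase x : Finset (Fin d → ℤ)),
          {p : Fin d → ℝ | (∑ i, p i * ((x i : ℝ) - (y i : ℝ))) = v x - v y})
        ≤ ∑ y ∈ (latCl B).erase x,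
            volume {p : Fin d → ℝ | (∑ i, p i * ((x i : ℝ) - (y i : ℝ))) = v x - v y} :=
          measure_biUnion_finset_le _ _
      _ = 0 := by
          apply Finset.sum_eq_zero
          intro y hy
          have hyx : y ≠ x := (Finset.mem_erase.mp hy).1
          apply hyperplane_null
          intro h0
          apply hyx
          funext i
          have := congrFun h0 i
          simp only [Pi.zero_apply, sub_eq_zero] at this
          exact_mod_cast this.symm
  -- Part 3
  have usub : ∀ x ∈ B, subdiff u B x ⊆ subdiff v B x := by
    intro x hx p hp
    have hxCl : x ∈ latCl B := Finset.mem_union_left _ hx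
    have hcon : ∀ z ∈ latCl B, (∑ i, p i * (z i : ℝ)) + (u x - dotZ p x) ≤ u z := by
      intro z hz
      have := hp z hz
      simp only [dotZ] at this ⊢
      linarith
    have h1 := le_env u B hxCl p (u x - dotZ p x) hcon
    have h2 := env_le_u u B hxCl
    have hc : u x = v x := by
      rw [← hv] at h1
      simp only [dotZ] at h1
      linarith
    rw [part1 x hx hc]
    exact hp
  refine ⟨fun x hx => ⟨part1 x hx, part2 x hx⟩, ?_⟩
  intro A hAB
  have h1 : subdiffU u A B ⊆ subdiffU v A B := by
    intro p hp
    simp only [subdiffU, Set.mem_iUnion] at hp ⊢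
    obtain ⟨x, hxA, hpx⟩ := hp
    exact ⟨x, hxA, usub x (hAB hxA) hpx⟩
  set T : Set (Fin d → ℝ) :=
    ⋃ x ∈ (A.filter (fun x => u x ≠ v x) : Finset (Fin d → ℤ)), subdiff v B x with hT
  have hTnull : volume T = 0 := by
    refine le_antisymm ?_ zero_le
    calc volume T ≤ ∑ x ∈ A.filter (fun x => u x ≠ v x), volume (subdiff v B x) :=
          measure_biUnion_finset_le _ _
      _ = 0 := by
          apply Finset.sum_eq_zero
          intro x hx
          rw [Finset.mem_filter] at hx
          exact part2 x (hAB hx.1) hx.2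
  have h2 : subdiffU v A B ⊆ subdiffU u A B ∪ T := by
    intro p hp
    simp only [subdiffU, Set.mem_iUnion] at hp
    obtain ⟨x, hxA, hpx⟩ := hp
    by_cases hc : u x = v x
    · left
      simp only [subdiffU, Set.mem_iUnion]
      exact ⟨x, hxA, (part1 x (hAB hxA) hc) ▸ hpx⟩
    · right
      exact Set.mem_biUnion (Finset.mem_filter.mpr ⟨hxA, hc⟩) hpx
  refine le_antisymm (measure_mono h1) ?_
  calc volume (subdiffU v A B) ≤ volume (subdiffU u A B ∪ T) := measure_mono h2
    _ ≤ volume (subdiffU u A B) + volume T := measure_union_le _ _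
    _ = volume (subdiffU u A B) := by rw [hTnull, add_zero]
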